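/- Suppose a ∈ C([0,∞),ℝ), b ∈ C([0,∞),[0,∞)), c ≡ 0, τ > 0, impulse constants b_j < 1, impulse points t_j ↑ ∞, and limsup_{t→∞} ∫_{t−τ}^{t} (∏_{s−τ < t_j ≤ s}(1−b_j))·b(s)·exp(∫_{s−τ}^{s} a(u) du) ds > 1. Then every solution of x'(t) + a(t)x(t) + b(t)x(t−τ) = 0 (t ≠ t_i), Δx(t_i) = b_i x(t_i), is oscillatory. -/

import Mathlib

open Filter Topology intervalIntegral

section OscCorAux

open MeasureTheory Set

namespace OscCor


/-- number of impulse points `≤ s` (as index of first impulse `> s`). -/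
noncomputable def NN (ti : ℕ → ℝ) (s : ℝ) : ℕ := sInf {k | s < ti k}

variable {a b : ℝ → ℝ} {τ : ℝ} {bi : ℕ → ℝ} {ti : ℕ → ℝ}

lemma NN_nonempty (htiTop : Tendsto ti atTop atTop) (s : ℝ) :
    {k | s < ti k}.Nonempty := by
  obtain ⟨k, hk⟩ := (htiTop.eventually (eventually_gt_atTop s)).exists
  exact ⟨k, hk⟩

lemma NN_spec (hti : StrictMono ti) (htiTop : Tendsto ti atTop atTop) (s : ℝ) (j : ℕ) :
    ti j ≤ s ↔ j < NN ti s := by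
  constructor
  · intro h
    by_contra hlt
    push_neg at hlt
    have h2 : s < ti (NN ti s) := Nat.sInf_mem (NN_nonempty htiTop s)
    exact absurd (le_trans (hti.monotone hlt) h) (not_le.2 h2)
  · intro h
    have h2 := Nat.notMem_of_lt_sInf h
    simp only [Set.mem_setOf_eq, not_lt] at h2
    exact h2

lemma NN_unique (hti : StrictMono ti) (htiTop : Tendsto ti atTop atTop) {s : ℝ} {m : ℕ}
    (h : ∀ j, ti j ≤ s ↔ j < m) : NN ti s = m := by
  have key : ∀ j, j < NN ti s ↔ j < m := fun j => by
    rw [← NN_spec hti htiTop s j, h j]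
  refine le_antisymm ?_ ?_
  · by_contra hc
    push_neg at hc
    exact lt_irrefl m ((key m).1 hc)
  · by_contra hc
    push_neg at hc
    exact lt_irrefl (NN ti s) ((key (NN ti s)).2 hc)

lemma NN_mono (hti : StrictMono ti) (htiTop : Tendsto ti atTop atTop) :
    Monotone (NN ti) := by
  intro u v huv
  by_contra hc
  push_neg at hc
  have h1 : ti (NN ti v) ≤ u := (NN_spec hti htiTop u _).2 hc
  have h2 : v < ti (NN ti v) := Nat.sInf_mem (NN_nonempty htiTop v)
  linarith

/-- the running product of `(1 - b_j)` over impulse points `≤ s`. -/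
noncomputable def PP (bi : ℕ → ℝ) (ti : ℕ → ℝ) (s : ℝ) : ℝ :=
  ∏ j ∈ Finset.range (NN ti s), (1 - bi j)

lemma PP_pos (hbi : ∀ i, bi i < 1) (s : ℝ) : 0 < PP bi ti s :=
  Finset.prod_pos fun j _ => by linarith [hbi j]

lemma PP_measurable (hti : StrictMono ti) (htiTop : Tendsto ti atTop atTop) :
    Measurable (PP bi ti) := by
  have hpre : ∀ y : ℝ, MeasurableSet ((NN ti) ⁻¹' {NN ti y}) := by
    intro y
    have hoc : Set.OrdConnected ((NN ti) ⁻¹' {NN ti y}) := by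
      refine ⟨fun u hu v hv w hw => ?_⟩
      simp only [Set.mem_preimage, Set.mem_singleton_iff] at hu hv ⊢
      have h1 := NN_mono hti htiTop hw.1
      have h2 := NN_mono hti htiTop hw.2
      omega
    exact hoc.measurableSet
  have hN : Measurable (NN ti) := measurable_to_countable hpre
  exact (measurable_from_nat (f := fun m => ∏ j ∈ Finset.range m, (1 - bi j))).comp hN

lemma PP_ratio (hbi : ∀ i, bi i < 1) (hti : StrictMono ti)
    (htiTop : Tendsto ti atTop atTop) (hτ : 0 ≤ τ) (s : ℝ) :
    (∏ᶠ j ∈ {j : ℕ | s - τ < ti j ∧ ti j ≤ s}, (1 - bi j))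
      = PP bi ti s / PP bi ti (s - τ) := by
  have hset : {j : ℕ | s - τ < ti j ∧ ti j ≤ s}
      = ↑(Finset.Ico (NN ti (s - τ)) (NN ti s)) := by
    ext j
    simp only [Set.mem_setOf_eq, Finset.coe_Ico, Set.mem_Ico]
    rw [NN_spec hti htiTop s j]
    constructor
    · rintro ⟨h1, h2⟩
      refine ⟨?_, h2⟩
      by_contra hc
      push_neg at hc
      have := (NN_spec hti htiTop (s - τ) j).2 hc
      linarith
    · rintro ⟨h1, h2⟩
      refine ⟨?_, h2⟩
      by_contra hc
      push_neg at hc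
      have := (NN_spec hti htiTop (s - τ) j).1 hc
      omega
  rw [hset, finprod_mem_coe_finset]
  have hmn : NN ti (s - τ) ≤ NN ti s := NN_mono hti htiTop (by linarith)
  have hcons := Finset.prod_Ico_consecutive (fun j => 1 - bi j)
    (Nat.zero_le (NN ti (s - τ))) hmn
  rw [eq_div_iff (PP_pos hbi (s - τ)).ne']
  unfold PP
  rw [Finset.range_eq_Ico, mul_comm]
  rw [Finset.range_eq_Ico]; exact hcons





noncomputable def AA (a : ℝ → ℝ) (t : ℝ) : ℝ := ∫ u in (0:ℝ)..t, a u

lemma AA_hasDerivAt (ha : Continuous a) (t : ℝ) : HasDerivAt (AA a) (a t) t :=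
  intervalIntegral.integral_hasDerivAt_right (ha.intervalIntegrable _ _)
    (ha.stronglyMeasurableAtFilter _ _) ha.continuousAt

lemma AA_continuous (ha : Continuous a) : Continuous (AA a) :=
  continuous_iff_continuousAt.2 fun t => (AA_hasDerivAt ha t).continuousAt

lemma AA_sub (ha : Continuous a) (s τ : ℝ) :
    AA a s - AA a (s - τ) = ∫ u in (s - τ)..s, a u :=
  integral_interval_sub_left (ha.intervalIntegrable _ _) (ha.intervalIntegrable _ _)

lemma NN_congr_iff (hti : StrictMono ti) (htiTop : Tendsto ti atTop atTop) {u v : ℝ}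
    (h : ∀ j, ti j ≤ u ↔ ti j ≤ v) : NN ti u = NN ti v :=
  NN_unique hti htiTop fun j => (h j).trans (NN_spec hti htiTop v j)

lemma PP_congr_iff (hti : StrictMono ti) (htiTop : Tendsto ti atTop atTop) {u v : ℝ}
    (h : ∀ j, ti j ≤ u ↔ ti j ≤ v) : PP bi ti u = PP bi ti v := by
  unfold PP; rw [NN_congr_iff hti htiTop h]

lemma PP_eventually_const_nhds (hti : StrictMono ti) (htiTop : Tendsto ti atTop atTop)
    {r : ℝ} (hnot : ∀ i, r ≠ ti i) :
    ∀ᶠ q in 𝓝 r, PP bi ti q = PP bi ti r := by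
  have hv : r < ti (NN ti r) := Nat.sInf_mem (NN_nonempty htiTop r)
  obtain ⟨u, hu, hiff⟩ : ∃ u, u < r ∧ ∀ q ∈ Ioo u (ti (NN ti r)), ∀ j,
      ti j ≤ q ↔ ti j ≤ r := by
    rcases hm : NN ti r with _ | k
    · refine ⟨r - 1, by linarith, fun q hq j => ?_⟩
      constructor
      · intro h
        exfalso
        have h0 : ti 0 ≤ ti j := hti.monotone (Nat.zero_le j)
        have := hq.2
        linarith
      · intro h
        have := (NN_spec hti htiTop r j).1 h
        omega
    · have hk : ti k ≤ r := (NN_spec hti htiTop r k).2 (by omega)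
      have hk' : ti k < r := lt_of_le_of_ne hk (Ne.symm (hnot k))
      refine ⟨ti k, hk', fun q hq j => ?_⟩
      constructor
      · intro h
        refine (NN_spec hti htiTop r j).2 ?_
        have hlt : ti j < ti (k + 1) := lt_of_le_of_lt h hq.2
        rw [hm]
        exact hti.lt_iff_lt.1 hlt
      · intro h
        have hj : j < NN ti r := (NN_spec hti htiTop r j).1 h
        rw [hm] at hj
        have : ti j ≤ ti k := hti.monotone (by omega)
        linarith [hq.1]
  filter_upwards [isOpen_Ioo.mem_nhds (⟨hu, hv⟩ : r ∈ Ioo u (ti (NN ti r)))] with q hq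
  exact PP_congr_iff hti htiTop (hiff q hq)

lemma NN_at_ti (hti : StrictMono ti) (htiTop : Tendsto ti atTop atTop) (i : ℕ) :
    NN ti (ti i) = i + 1 :=
  NN_unique hti htiTop fun j => by rw [hti.le_iff_le]; omega

lemma PP_at_ti (hti : StrictMono ti) (htiTop : Tendsto ti atTop atTop) (i : ℕ) :
    PP bi ti (ti i) = (∏ j ∈ Finset.range i, (1 - bi j)) * (1 - bi i) := by
  unfold PP; rw [NN_at_ti hti htiTop, Finset.prod_range_succ]

lemma PP_eventually_const_Ici (hti : StrictMono ti) (htiTop : Tendsto ti atTop atTop) (i : ℕ) :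
    ∀ᶠ q in 𝓝[Ici (ti i)] (ti i), PP bi ti q = PP bi ti (ti i) := by
  have hmem : Ico (ti i) (ti (i + 1)) ∈ 𝓝[Ici (ti i)] (ti i) := by
    rw [← Set.Ici_inter_Iio]
    exact inter_mem self_mem_nhdsWithin
      (mem_nhdsWithin_of_mem_nhds (Iio_mem_nhds (hti (by omega))))
  filter_upwards [hmem] with q hq
  refine PP_congr_iff hti htiTop fun j => ?_
  constructor
  · intro h
    have : ti j < ti (i + 1) := lt_of_le_of_lt h hq.2
    have := hti.lt_iff_lt.1 this
    exact hti.monotone (by omega)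
  · intro h
    exact le_trans h hq.1

lemma PP_eventually_range_Iio (hti : StrictMono ti) (htiTop : Tendsto ti atTop atTop) (i : ℕ) :
    ∀ᶠ q in 𝓝[Iio (ti i)] (ti i), PP bi ti q = ∏ j ∈ Finset.range i, (1 - bi j) := by
  have key : ∀ q, (∀ j, ti j ≤ q ↔ j < i) → PP bi ti q = ∏ j ∈ Finset.range i, (1 - bi j) := by
    intro q hq
    unfold PP; rw [NN_unique hti htiTop hq]
  rcases i with _ | k
  · filter_upwards [self_mem_nhdsWithin] with q hq
    refine key q fun j => ?_
    constructor
    · intro h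
      have : ti 0 ≤ ti j := hti.monotone (Nat.zero_le j)
      have h2 : ti 0 ≤ q := le_trans this h
      exact absurd h2 (not_le.2 hq)
    · omega
  · have hmem : Ioi (ti k) ∈ 𝓝[Iio (ti (k + 1))] (ti (k + 1)) :=
      mem_nhdsWithin_of_mem_nhds (Ioi_mem_nhds (hti (by omega)))
    filter_upwards [hmem, self_mem_nhdsWithin] with q hq1 hq2
    refine key q fun j => ?_
    constructor
    · intro h
      have : ti j < ti (k + 1) := lt_of_le_of_lt h hq2
      exact hti.lt_iff_lt.1 this
    · intro h
      have : ti j ≤ ti k := hti.monotone (by omega)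
      exact le_trans this (le_of_lt hq1)

noncomputable def zz (a : ℝ → ℝ) (bi ti : ℕ → ℝ) (x : ℝ → ℝ) (t : ℝ) : ℝ :=
  x t * Real.exp (AA a t) * PP bi ti t

noncomputable def gg (a b : ℝ → ℝ) (τ : ℝ) (bi ti : ℕ → ℝ) (s : ℝ) : ℝ :=
  PP bi ti s / PP bi ti (s - τ) * b s * Real.exp (AA a s - AA a (s - τ))

lemma gg_nonneg (hbi : ∀ i, bi i < 1) (hbnn : ∀ t, 0 ≤ b t) (s : ℝ) :
    0 ≤ gg a b τ bi ti s :=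
  mul_nonneg (mul_nonneg (div_pos (PP_pos hbi s) (PP_pos hbi (s - τ))).le (hbnn s))
    (Real.exp_pos _).le

lemma zz_pos (hbi : ∀ i, bi i < 1) {t : ℝ} (hx : 0 < x t) : 0 < zz a bi ti x t :=
  mul_pos (mul_pos hx (Real.exp_pos _)) (PP_pos hbi t)

lemma zz_hasDerivAt (ha : Continuous a) (hbi : ∀ i, bi i < 1) (hti : StrictMono ti)
    (htiTop : Tendsto ti atTop atTop) {r : ℝ}
    (hxd : HasDerivAt x (-(a r * x r + b r * x (r - τ))) r) (hnot : ∀ i, r ≠ ti i) :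
    HasDerivAt (zz a bi ti x) (-(gg a b τ bi ti r * zz a bi ti x (r - τ))) r := by
  have hPc := PP_eventually_const_nhds (bi := bi) hti htiTop hnot
  have hE : HasDerivAt (fun q => Real.exp (AA a q)) (Real.exp (AA a r) * a r) r :=
    (AA_hasDerivAt ha r).exp
  have h1 : HasDerivAt (fun q => x q * Real.exp (AA a q) * PP bi ti r)
      ((-(a r * x r + b r * x (r - τ)) * Real.exp (AA a r)
        + x r * (Real.exp (AA a r) * a r)) * PP bi ti r) r := (hxd.mul hE).mul_const _
  have heq : zz a bi ti x =ᶠ[𝓝 r] fun q => x q * Real.exp (AA a q) * PP bi ti r :=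
    hPc.mono fun q hq => by simp only [zz, hq]
  have h2 := h1.congr_of_eventuallyEq heq
  convert h2 using 1
  · rfl
  · rfl
  simp only [zz, gg]
  rw [Real.exp_sub]
  have h3 := (PP_pos (ti := ti) hbi (r - τ)).ne'
  have h4 := (Real.exp_pos (AA a (r - τ))).ne'
  field_simp
  ring

lemma zz_continuousAt_of_ne (ha : Continuous a) (hti : StrictMono ti)
    (htiTop : Tendsto ti atTop atTop) {r : ℝ}
    (hxc : ContinuousAt x r) (hnot : ∀ i, r ≠ ti i) :
    ContinuousAt (zz a bi ti x) r := by
  have hPc := PP_eventually_const_nhds (bi := bi) hti htiTop hnot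
  have h1 : ContinuousAt (fun q => x q * Real.exp (AA a q) * PP bi ti r) r :=
    (hxc.mul (Real.continuous_exp.comp (AA_continuous ha)).continuousAt).mul
      continuousAt_const
  have heq : (fun q => x q * Real.exp (AA a q) * PP bi ti r) =ᶠ[𝓝 r] zz a bi ti x :=
    hPc.mono fun q hq => by simp only [zz, hq]
  exact h1.congr heq

lemma zz_continuousAt_ti (ha : Continuous a) (hbi : ∀ i, bi i < 1) (hti : StrictMono ti)
    (htiTop : Tendsto ti atTop atTop) (i : ℕ)
    (hrc : ContinuousWithinAt x (Set.Ici (ti i)) (ti i))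
    (himp : Tendsto x (𝓝[Iio (ti i)] (ti i)) (𝓝 ((1 - bi i) * x (ti i)))) :
    ContinuousAt (zz a bi ti x) (ti i) := by
  have hEc : ContinuousAt (fun q => Real.exp (AA a q)) (ti i) :=
    (Real.continuous_exp.comp (AA_continuous ha)).continuousAt
  have hR : ContinuousWithinAt (zz a bi ti x) (Ici (ti i)) (ti i) := by
    have hPc := PP_eventually_const_Ici (bi := bi) hti htiTop i
    have base : ContinuousWithinAt (fun q => x q * Real.exp (AA a q) * PP bi ti (ti i))
        (Ici (ti i)) (ti i) :=
      (hrc.mul hEc.continuousWithinAt).mul continuousWithinAt_const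
    refine ContinuousWithinAt.congr_of_eventuallyEq base ?_ (by simp [zz])
    exact hPc.mono fun q hq => by simp only [zz, hq]
  have hL : ContinuousWithinAt (zz a bi ti x) (Iio (ti i)) (ti i) := by
    have hPc := PP_eventually_range_Iio (bi := bi) hti htiTop i
    have hAl : Tendsto (fun q => Real.exp (AA a q)) (𝓝[Iio (ti i)] (ti i))
        (𝓝 (Real.exp (AA a (ti i)))) := hEc.continuousWithinAt
    have htend : Tendsto (fun q => x q * Real.exp (AA a q) * ∏ j ∈ Finset.range i, (1 - bi j))
        (𝓝[Iio (ti i)] (ti i))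
        (𝓝 ((1 - bi i) * x (ti i) * Real.exp (AA a (ti i)) * ∏ j ∈ Finset.range i, (1 - bi j))) :=
      (himp.mul hAl).mul_const _
    have htend2 : Tendsto (zz a bi ti x) (𝓝[Iio (ti i)] (ti i))
        (𝓝 ((1 - bi i) * x (ti i) * Real.exp (AA a (ti i)) * ∏ j ∈ Finset.range i, (1 - bi j))) := by
      refine htend.congr' ?_
      exact hPc.mono fun q hq => by simp only [zz, hq]
    have hval : (1 - bi i) * x (ti i) * Real.exp (AA a (ti i)) * ∏ j ∈ Finset.range i, (1 - bi j)
        = zz a bi ti x (ti i) := by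
      simp only [zz]
      rw [PP_at_ti hti htiTop]
      ring
    rw [ContinuousWithinAt]
    rw [← hval]
    exact htend2
  have h := hL.union hR
  rwa [Iio_union_Ici, continuousWithinAt_univ] at h





lemma gg_measurable (ha : Continuous a) (hb : Continuous b) (hti : StrictMono ti)
    (htiTop : Tendsto ti atTop atTop) : Measurable (gg a b τ bi ti) := by
  have hP := PP_measurable (bi := bi) hti htiTop
  have hPs : Measurable (fun s => PP bi ti (s - τ)) :=
    hP.comp (measurable_id.sub measurable_const)
  have hA := AA_continuous ha
  exact ((hP.div hPs).mul hb.measurable).mul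
    (Real.continuous_exp.comp (hA.sub (hA.comp (continuous_id.sub continuous_const)))).measurable

lemma PP_bounds (hbi : ∀ i, bi i < 1) (hti : StrictMono ti)
    (htiTop : Tendsto ti atTop atTop) (β : ℝ) :
    ∃ M m : ℝ, 0 < m ∧ ∀ w ≤ β, m ≤ PP bi ti w ∧ PP bi ti w ≤ M := by
  have hne : (Finset.range (NN ti β + 1)).Nonempty := ⟨0, by simp⟩
  refine ⟨(Finset.range (NN ti β + 1)).sup' hne (fun k => ∏ j ∈ Finset.range k, (1 - bi j)),
          (Finset.range (NN ti β + 1)).inf' hne (fun k => ∏ j ∈ Finset.range k, (1 - bi j)),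
          ?_, ?_⟩
  · rw [Finset.lt_inf'_iff]
    exact fun k _ => Finset.prod_pos fun j _ => by linarith [hbi j]
  · intro w hw
    have hn : NN ti w ≤ NN ti β := NN_mono hti htiTop hw
    have hmem : NN ti w ∈ Finset.range (NN ti β + 1) := Finset.mem_range.2 (by omega)
    unfold PP
    exact ⟨Finset.inf'_le _ hmem, Finset.le_sup' (fun k => ∏ j ∈ Finset.range k, (1 - bi j)) hmem⟩

lemma integrable_gg_mul (ha : Continuous a) (hb : Continuous b) (hbi : ∀ i, bi i < 1)
    (hti : StrictMono ti) (htiTop : Tendsto ti atTop atTop)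
    (hτ : 0 ≤ τ) {α β : ℝ} (hαβ : α ≤ β) (w : ℝ → ℝ) (hw : ContinuousOn w (Icc α β)) :
    IntervalIntegrable (fun s => gg a b τ bi ti s * w s) volume α β := by
  rw [intervalIntegrable_iff_integrableOn_Ioc_of_le hαβ]
  obtain ⟨M, m, hm, hbd⟩ := PP_bounds hbi hti htiTop β
  have hφcont : ContinuousOn
      (fun s => b s * Real.exp (AA a s - AA a (s - τ)) * w s) (Icc α β) :=
    ((hb.mul (Real.continuous_exp.comp ((AA_continuous ha).sub
      ((AA_continuous ha).comp (continuous_id.sub continuous_const))))).continuousOn).mul hw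
  obtain ⟨C, hC⟩ := isCompact_Icc.exists_bound_of_continuousOn hφcont
  have hmeas : AEStronglyMeasurable (fun s => gg a b τ bi ti s * w s)
      (volume.restrict (Ioc α β)) :=
    ((gg_measurable ha hb hti htiTop).aestronglyMeasurable).mul
      ((hw.mono Ioc_subset_Icc_self).aestronglyMeasurable measurableSet_Ioc)
  refine Integrable.mono' (integrable_const (M / m * C)) hmeas ?_
  refine (ae_restrict_iff' measurableSet_Ioc).2 (ae_of_all _ fun s hs => ?_)
  have hsI : s ∈ Icc α β := Ioc_subset_Icc_self hs
  have h1 : PP bi ti s ≤ M := (hbd s hsI.2).2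
  have h2 : m ≤ PP bi ti (s - τ) := (hbd (s - τ) (by linarith [hsI.2])).1
  have hP1 : 0 < PP bi ti s := PP_pos hbi s
  have hP2 : 0 < PP bi ti (s - τ) := PP_pos hbi (s - τ)
  have hdiv : PP bi ti s / PP bi ti (s - τ) ≤ M / m :=
    div_le_div₀ (hP1.le.trans h1) h1 hm h2
  have hre : gg a b τ bi ti s * w s
      = PP bi ti s / PP bi ti (s - τ) * (b s * Real.exp (AA a s - AA a (s - τ)) * w s) := by
    simp only [gg]; ring
  rw [Real.norm_eq_abs, hre, abs_mul]
  have hC' := hC s hsI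
  rw [Real.norm_eq_abs] at hC'
  rw [abs_of_pos (div_pos hP1 hP2)]
  exact mul_le_mul hdiv hC' (abs_nonneg _) ((div_pos hP1 hP2).le.trans hdiv)

lemma osc_aux (a b : ℝ → ℝ) (ha : Continuous a) (hb : Continuous b) (hbnn : ∀ t, 0 ≤ b t)
    (τ : ℝ) (hτ : 0 < τ)
    (bi : ℕ → ℝ) (hbi : ∀ i, bi i < 1)
    (ti : ℕ → ℝ) (hti : StrictMono ti) (hti0 : 0 < ti 0)
    (htiTop : Tendsto ti atTop atTop)
    (hcrit : 1 < Filter.limsup (fun t => ∫ s in (t - τ)..t,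
      (∏ᶠ j ∈ {j : ℕ | s - τ < ti j ∧ ti j ≤ s}, (1 - bi j)) * b s *
        Real.exp (∫ u in (s - τ)..s, a u)) Filter.atTop)
    (x : ℝ → ℝ)
    (hsol : ∀ t, 0 < t → (∀ i, t ≠ ti i) →
      HasDerivAt x (-(a t * x t + b t * x (t - τ))) t)
    (hrc : ∀ i, ContinuousWithinAt x (Set.Ici (ti i)) (ti i))
    (himp : ∀ i, Tendsto x (nhdsWithin (ti i) (Set.Iio (ti i)))
      (nhds ((1 - bi i) * x (ti i))))
    (T : ℝ) (hpos : ∀ t, T < t → 0 < x t) : False := by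
  set T₁ : ℝ := max T 0 + 1 with hT₁def
  have hT₁pos : 0 < T₁ := by
    have := le_max_right T (0:ℝ); linarith
  have hTT₁ : T < T₁ := by
    have := le_max_left T (0:ℝ); linarith
  have hxpos : ∀ t, T₁ ≤ t → 0 < x t := fun t htt => hpos t (lt_of_lt_of_le hTT₁ htt)
  have hzpos : ∀ r, T₁ ≤ r → 0 < zz a bi ti x r := fun r hr => zz_pos hbi (hxpos r hr)
  have hzc : ∀ r : ℝ, 0 < r → ContinuousAt (zz a bi ti x) r := by
    intro r hr
    by_cases hnot : ∀ i, r ≠ ti i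
    · exact zz_continuousAt_of_ne ha hti htiTop (hsol r hr hnot).continuousAt hnot
    · push_neg at hnot
      obtain ⟨i, hi⟩ := hnot
      subst hi
      exact zz_continuousAt_ti ha hbi hti htiTop i (hrc i) (himp i)
  have hwcont : ∀ α β : ℝ, T₁ + τ ≤ α →
      ContinuousOn (fun s => zz a bi ti x (s - τ)) (Icc α β) := by
    intro α β hα s hs
    have h1 : (0:ℝ) < s - τ := by
      have := hs.1; linarith
    have h2 : ContinuousAt ((zz a bi ti x) ∘ (fun s : ℝ => s - τ)) s :=
      ContinuousAt.comp (hzc (s - τ) h1) ((continuous_sub_right τ).continuousAt)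
    exact h2.continuousWithinAt
  have hftc : ∀ α β : ℝ, T₁ + τ ≤ α → α ≤ β →
      zz a bi ti x β - zz a bi ti x α
        = ∫ s in α..β, -(gg a b τ bi ti s * zz a bi ti x (s - τ)) := by
    intro α β hα hαβ
    refine (integral_eq_of_hasDerivAt_off_countable_of_le (zz a bi ti x)
      (fun s => -(gg a b τ bi ti s * zz a bi ti x (s - τ))) hαβ
      (Set.countable_range ti) ?_ ?_ ?_).symm
    · intro s hs
      have hspos : (0:ℝ) < s := by have := hs.1; linarith
      exact (hzc s hspos).continuousWithinAt
    · rintro r ⟨hr, hrn⟩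
      have hrpos : (0:ℝ) < r := by have := hr.1; linarith
      exact zz_hasDerivAt ha hbi hti htiTop
        (hsol r hrpos fun i hri => hrn ⟨i, hri.symm⟩)
        (fun i hri => hrn ⟨i, hri.symm⟩)
    · exact (integrable_gg_mul ha hb hbi hti htiTop hτ.le hαβ _ (hwcont α β hα)).neg
  have hanti : ∀ α β : ℝ, T₁ + τ ≤ α → α ≤ β → zz a bi ti x β ≤ zz a bi ti x α := by
    intro α β hα hαβ
    have h := hftc α β hα hαβ
    have hnn : 0 ≤ ∫ s in α..β, gg a b τ bi ti s * zz a bi ti x (s - τ) := by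
      refine intervalIntegral.integral_nonneg hαβ fun u hu => ?_
      exact mul_nonneg (gg_nonneg hbi hbnn u)
        (hzpos (u - τ) (by have := hu.1; linarith)).le
    rw [intervalIntegral.integral_neg] at h
    linarith
  have hkey : ∀ t : ℝ, T₁ + 3 * τ ≤ t → (∫ s in (t - τ)..t, gg a b τ bi ti s) ≤ 1 := by
    intro t ht
    have h1 : T₁ + τ ≤ t - τ := by linarith
    have h2 : t - τ ≤ t := by linarith
    have hKpos : 0 < zz a bi ti x (t - τ) := hzpos _ (by linarith)
    have hftc' := hftc (t - τ) t h1 h2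
    have hggint : IntervalIntegrable (gg a b τ bi ti) volume (t - τ) t := by
      have := integrable_gg_mul ha hb hbi hti htiTop hτ.le h2
        (fun _ => (1:ℝ)) continuousOn_const
      simpa using this
    have hmono : zz a bi ti x (t - τ) * ∫ s in (t - τ)..t, gg a b τ bi ti s
        ≤ ∫ s in (t - τ)..t, gg a b τ bi ti s * zz a bi ti x (s - τ) := by
      rw [← intervalIntegral.integral_const_mul]
      refine intervalIntegral.integral_mono_on h2
        (hggint.const_mul _)
        (integrable_gg_mul ha hb hbi hti htiTop hτ.le h2 _ (hwcont (t - τ) t h1))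
        fun s hs => ?_
      have hle : zz a bi ti x (t - τ) ≤ zz a bi ti x (s - τ) := by
        refine hanti (s - τ) (t - τ) ?_ ?_
        · have := hs.1; linarith
        · have := hs.2; linarith
      calc zz a bi ti x (t - τ) * gg a b τ bi ti s
          ≤ zz a bi ti x (s - τ) * gg a b τ bi ti s :=
            mul_le_mul_of_nonneg_right hle (gg_nonneg hbi hbnn s)
        _ = gg a b τ bi ti s * zz a bi ti x (s - τ) := mul_comm _ _
    have hzt : 0 < zz a bi ti x t := hzpos t (by linarith)
    rw [intervalIntegral.integral_neg] at hftc'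
    have hfin : zz a bi ti x (t - τ) * ∫ s in (t - τ)..t, gg a b τ bi ti s
        < zz a bi ti x (t - τ) * 1 := by
      rw [mul_one]; linarith
    exact ((mul_lt_mul_iff_right₀ hKpos).1 hfin).le
  have hrw : (fun t => ∫ s in (t - τ)..t,
      (∏ᶠ j ∈ {j : ℕ | s - τ < ti j ∧ ti j ≤ s}, (1 - bi j)) * b s *
        Real.exp (∫ u in (s - τ)..s, a u))
      = fun t => ∫ s in (t - τ)..t, gg a b τ bi ti s := by
    funext t
    refine intervalIntegral.integral_congr fun s _ => ?_
    simp only [gg]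
    rw [PP_ratio hbi hti htiTop hτ.le s, AA_sub ha s τ]
  rw [hrw] at hcrit
  have hev : ∀ᶠ t in atTop, (∫ s in (t - τ)..t, gg a b τ bi ti s) ≤ 1 :=
    eventually_atTop.2 ⟨T₁ + 3 * τ, hkey⟩
  have hnn : ∀ᶠ t : ℝ in atTop, 0 ≤ ∫ s in (t - τ)..t, gg a b τ bi ti s :=
    Eventually.of_forall fun t =>
      intervalIntegral.integral_nonneg (by linarith) fun u _ => gg_nonneg hbi hbnn u
  have hls := Filter.limsup_le_of_le
    (Filter.isCoboundedUnder_le_of_eventually_le atTop hnn) hev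
  linarith


end OscCor

end OscCorAux

open OscCor in
/-- Corollary 1: if
`limsup_{t→∞} ∫_{t-τ}^{t} (∏_{s-τ < t_j ≤ s}(1-b_j)) b(s) exp(∫_{s-τ}^{s} a) ds > 1`,
then every solution of `x'(t) + a(t)x(t) + b(t)x(t-τ) = 0` (`t ≠ t_i`),
`Δx(t_i) = b_i x(t_i)`, is oscillatory (neither eventually positive nor eventually
negative). -/
theorem oscillation_corollary_one
    (a b : ℝ → ℝ) (ha : Continuous a) (hb : Continuous b) (hbnn : ∀ t, 0 ≤ b t)
    (τ : ℝ) (hτ : 0 < τ)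
    (bi : ℕ → ℝ) (hbi : ∀ i, bi i < 1)
    (ti : ℕ → ℝ) (hti : StrictMono ti) (hti0 : 0 < ti 0)
    (htiTop : Tendsto ti atTop atTop)
    (hcrit : 1 < Filter.limsup (fun t => ∫ s in (t - τ)..t,
      (∏ᶠ j ∈ {j : ℕ | s - τ < ti j ∧ ti j ≤ s}, (1 - bi j)) * b s *
        Real.exp (∫ u in (s - τ)..s, a u)) Filter.atTop)
    (x : ℝ → ℝ)
    (hsol : ∀ t, 0 < t → (∀ i, t ≠ ti i) →
      HasDerivAt x (-(a t * x t + b t * x (t - τ))) t)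
    (hrc : ∀ i, ContinuousWithinAt x (Set.Ici (ti i)) (ti i))
    (himp : ∀ i, Tendsto x (nhdsWithin (ti i) (Set.Iio (ti i)))
      (nhds ((1 - bi i) * x (ti i)))) :
    (¬ ∃ T, ∀ t, T < t → 0 < x t) ∧ (¬ ∃ T, ∀ t, T < t → x t < 0) := by
  constructor
  · rintro ⟨T, hT⟩
    exact osc_aux a b ha hb hbnn τ hτ bi hbi ti hti hti0 htiTop hcrit x hsol hrc himp T hT
  · rintro ⟨T, hT⟩
    refine osc_aux a b ha hb hbnn τ hτ bi hbi ti hti hti0 htiTop hcrit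
      (fun t => -x t) ?_ ?_ ?_ T ?_
    · intro t ht hnot
      have h := (hsol t ht hnot).neg
      convert h using 1
      · rfl
      · rfl
      · rfl
      ring
    · intro i
      exact (hrc i).neg
    · intro i
      have h := (himp i).neg
      convert h using 2
      ring
    · intro t ht
      simpa using (hT t ht)
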